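/- Let d be a compatible left-invariant metric on a metrisable topological group G. The following are equivalent: (1) d is metrically proper, i.e., d(g_n,1) → ∞ whenever g_n → ∞; (2) for every subset A ⊆ G, A has finite d-diameter if and only if A has property (OB) relative to G; (3) for every compatible left-invariant metric ∂ on G, the identity map (G,∂) → (G,d) is metrically proper; (4) for every compatible left-invariant metric ∂ on G, the identity map (G,d) → (G,∂) is bornologous. -/

import Mathlib

open Filter Topology
open scoped Pointwise

/-- A (plain) metric given as a distance function. -/
def IsMetric {G : Type*} (d : G → G → ℝ) : Prop :=
  (∀ x y, d x y = 0 ↔ x = y) ∧ (∀ x y, d x y = d y x) ∧ ∀ x y z, d x z ≤ d x y + d y z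

/-- The metric `d` induces the topology of `G`. -/
def IsCompatible (G : Type*) [TopologicalSpace G] (d : G → G → ℝ) : Prop :=
  ∀ (x : G) (s : Set G), s ∈ nhds x ↔ ∃ ε > (0 : ℝ), {y : G | d x y < ε} ⊆ s

/-- A compatible left-invariant metric on a topological group. -/
def IsCompatibleLeftInvariantMetric (G : Type*) [Group G] [TopologicalSpace G]
    (d : G → G → ℝ) : Prop :=
  IsMetric d ∧ IsCompatible G d ∧ ∀ h g f : G, d (h * g) (h * f) = d g f

/-- A set has finite diameter with respect to `d`. -/
def FiniteDiam {G : Type*} (d : G → G → ℝ) (A : Set G) : Prop :=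
  ∃ C : ℝ, ∀ x ∈ A, ∀ y ∈ A, d x y ≤ C

/-- `A` has property (OB) relative to `G`: finite diameter for every compatible
left-invariant metric. -/
def HasRelPropOB (G : Type*) [Group G] [TopologicalSpace G] (A : Set G) : Prop :=
  ∀ d : G → G → ℝ, IsCompatibleLeftInvariantMetric G d → FiniteDiam d A

/-- A sequence tends to infinity in `G` if some compatible left-invariant metric
witnesses `d (g n) 1 → ∞`. -/
def TendsToInfinity (G : Type*) [Group G] [TopologicalSpace G] (g : ℕ → G) : Prop :=
  ∃ d : G → G → ℝ, IsCompatibleLeftInvariantMetric G d ∧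
    Filter.Tendsto (fun n => d (g n) 1) Filter.atTop Filter.atTop

/-- A compatible left-invariant metric is metrically proper if `d (g n) 1 → ∞`
whenever `g n → ∞`. -/
def MetricallyProperMetric (G : Type*) [Group G] [TopologicalSpace G]
    (d : G → G → ℝ) : Prop :=
  ∀ g : ℕ → G, TendsToInfinity G g →
    Filter.Tendsto (fun n => d (g n) 1) Filter.atTop Filter.atTop

lemma IsMetric.nonneg' {G : Type*} {d : G → G → ℝ} (h : IsMetric d) (x y : G) :
    0 ≤ d x y := by
  have h0 : d x x = 0 := (h.1 x x).2 rfl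
  have h1 := h.2.2 x y x
  have h2 := h.2.1 y x
  linarith

lemma li_eq {G : Type*} [Group G] {e : G → G → ℝ} (hm : IsMetric e)
    (hl : ∀ h g f : G, e (h * g) (h * f) = e g f) (x y : G) :
    e x y = e (x⁻¹ * y) 1 := by
  have h := hl x⁻¹ x y
  simp only [inv_mul_cancel] at h
  rw [← h]
  exact hm.2.1 _ _

lemma ball_diam {G : Type*} [Group G] {d : G → G → ℝ} (hm : IsMetric d) (b : ℝ) :
    FiniteDiam d {z : G | d z 1 ≤ b} := by
  refine ⟨2 * b, fun x hx y hy => ?_⟩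
  have h1 := hm.2.2 x 1 y
  have h2 := hm.2.1 1 y
  simp only [Set.mem_setOf_eq] at hx hy
  linarith

theorem metrically_proper_tfae {G : Type*} [Group G] [TopologicalSpace G]
    [IsTopologicalGroup G] [TopologicalSpace.MetrizableSpace G]
    (d : G → G → ℝ) (hd : IsCompatibleLeftInvariantMetric G d) :
    List.TFAE
      [ MetricallyProperMetric G d,
        ∀ A : Set G, FiniteDiam d A ↔ HasRelPropOB G A,
        ∀ e : G → G → ℝ, IsCompatibleLeftInvariantMetric G e →
          ∀ A : Set G, FiniteDiam d A → FiniteDiam e A,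
        ∀ e : G → G → ℝ, IsCompatibleLeftInvariantMetric G e →
          ∀ R > (0 : ℝ), ∃ S > (0 : ℝ), ∀ x y : G, d x y ≤ R → e x y ≤ S ] := by
  obtain ⟨hdm, hdc, hdl⟩ := hd
  tfae_have 3 → 2
  | h3, A => ⟨fun hA e he => h3 e he A hA, fun hA => hA d ⟨hdm, hdc, hdl⟩⟩
  tfae_have 2 → 3
  | h2, e, he, A, hA => (h2 A).1 hA e he
  tfae_have 3 → 4
  | h3, e, he, R, hR => by
    obtain ⟨C, hC⟩ := h3 e he {z : G | d z 1 ≤ R} (ball_diam hdm R)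
    refine ⟨max C 1, lt_of_lt_of_le one_pos (le_max_right _ _), fun x y hxy => ?_⟩
    have h1 : (1 : G) ∈ {z : G | d z 1 ≤ R} := by
      simp only [Set.mem_setOf_eq, (hdm.1 1 1).2 rfl]; linarith
    have hz : x⁻¹ * y ∈ {z : G | d z 1 ≤ R} := by
      simp only [Set.mem_setOf_eq, ← li_eq hdm hdl x y]; exact hxy
    calc e x y = e (x⁻¹ * y) 1 := li_eq he.1 he.2.2 x y
    _ ≤ C := hC _ hz _ h1
    _ ≤ max C 1 := le_max_left _ _
  tfae_have 4 → 3
  | h4, e, he, A, ⟨C, hC⟩ => by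
    obtain ⟨S, hS, hSg⟩ := h4 e he (max C 1) (lt_of_lt_of_le one_pos (le_max_right _ _))
    exact ⟨S, fun x hx y hy => hSg x y ((hC x hx y hy).trans (le_max_left _ _))⟩
  tfae_have 3 → 1
  | h3, g, ⟨e, he, hte⟩ => by
    rw [tendsto_atTop]
    intro b
    obtain ⟨C, hC⟩ := h3 e he {z : G | d z 1 ≤ b} (ball_diam hdm b)
    filter_upwards [hte.eventually_gt_atTop C] with n hn
    by_contra hlt
    push_neg at hlt
    have hb : (0 : ℝ) ≤ b := (hdm.nonneg' (g n) 1).trans hlt.le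
    have h1 : (1 : G) ∈ {z : G | d z 1 ≤ b} := by
      simp only [Set.mem_setOf_eq, (hdm.1 1 1).2 rfl]; exact hb
    have := hC (g n) hlt.le 1 h1
    linarith
  tfae_have 1 → 3
  | h1, e, he, A, ⟨C, hC⟩ => by
    by_contra hne
    simp only [FiniteDiam, not_exists] at hne
    push_neg at hne
    choose x hx y hy hxy using hne
    set g : ℕ → G := fun n => (x n)⁻¹ * y n with hg
    have hten : Tendsto (fun n : ℕ => e (g n) 1) atTop atTop := by
      refine tendsto_atTop_mono (fun n => ?_) tendsto_natCast_atTop_atTop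
      rw [hg]
      simp only
      rw [← li_eq he.1 he.2.2]
      exact (hxy (n : ℝ)).le
    have htd := h1 g ⟨e, he, hten⟩
    obtain ⟨n, hn⟩ := (htd.eventually_gt_atTop C).exists
    have heq : d (g n) 1 = d (x n) (y n) := (li_eq hdm hdl _ _).symm
    linarith [hC _ (hx (n : ℝ)) _ (hy (n : ℝ))]
  tfae_finish
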